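/- The Cauchy product (convolution) in ℓ₁(ℕ₀), the Banach algebra of absolutely summable scalar-valued (real or complex) sequences indexed by the non-negative integers with product (x ∗ y)(n) = Σ_{k=0}^{n} x(k) y(n−k), is not an open map from ℓ₁(ℕ₀) × ℓ₁(ℕ₀) to ℓ₁(ℕ₀). That is, there exist x, y ∈ ℓ₁(ℕ₀) and ε > 0 such that for every δ > 0 the ball B(x ∗ y, δ) is not contained in B(x, ε) ∗ B(y, ε). -/

import Mathlib

open scoped ENNReal

noncomputable def toC {𝕜 : Type*} [RCLike 𝕜] : 𝕜 →+* ℂ where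
  toFun a := ⟨RCLike.re a, RCLike.im a⟩
  map_one' := by apply Complex.ext <;> simp
  map_mul' a b := by apply Complex.ext <;> simp [RCLike.mul_re, RCLike.mul_im]
  map_zero' := by apply Complex.ext <;> simp
  map_add' a b := by apply Complex.ext <;> simp

lemma norm_toC {𝕜 : Type*} [RCLike 𝕜] (a : 𝕜) : ‖toC a‖ = ‖a‖ := by
  have h1 : ‖toC a‖ ^ 2 = ‖a‖ ^ 2 := by
    rw [RCLike.norm_sq_eq_def (K := ℂ), RCLike.norm_sq_eq_def (K := 𝕜)]
    rfl
  calc ‖toC a‖ = Real.sqrt (‖toC a‖ ^ 2) := (Real.sqrt_sq (norm_nonneg _)).symm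
  _ = Real.sqrt (‖a‖ ^ 2) := by rw [h1]
  _ = ‖a‖ := Real.sqrt_sq (norm_nonneg _)
open Metric Finset

noncomputable def Fn (a : ℕ → ℂ) (z : ℂ) : ℂ := ∑' n, a n * z ^ n

lemma term_norm_le {a : ℕ → ℂ} {z : ℂ} (hz : ‖z‖ ≤ 1) (n : ℕ) :
    ‖a n * z ^ n‖ ≤ ‖a n‖ := by
  rw [norm_mul, norm_pow]
  calc ‖a n‖ * ‖z‖ ^ n ≤ ‖a n‖ * 1 ^ n := by
        gcongr
  _ = ‖a n‖ := by simp

lemma summable_term {a : ℕ → ℂ} (ha : Summable fun n => ‖a n‖) {z : ℂ} (hz : ‖z‖ ≤ 1) :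
    Summable fun n => ‖a n * z ^ n‖ :=
  ha.of_nonneg_of_le (fun _ => norm_nonneg _) (term_norm_le hz)

lemma norm_Fn_le {a : ℕ → ℂ} (ha : Summable fun n => ‖a n‖) {z : ℂ} (hz : ‖z‖ ≤ 1) :
    ‖Fn a z‖ ≤ ∑' n, ‖a n‖ := by
  refine (norm_tsum_le_tsum_norm (summable_term ha hz)).trans ?_
  exact (summable_term ha hz).tsum_le_tsum (term_norm_le hz) ha

lemma Fn_continuousOn {a : ℕ → ℂ} (ha : Summable fun n => ‖a n‖) :
    ContinuousOn (Fn a) (closedBall 0 1) := by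
  refine (tendstoUniformlyOn_tsum ha fun n x hx => ?_).continuousOn ?_
  · exact term_norm_le (by simpa using mem_closedBall_zero_iff.mp hx) n
  · exact (Filter.Eventually.of_forall (f := Filter.atTop) fun s =>
      continuousOn_finset_sum s fun i _ => (continuous_const.mul (continuous_pow i : Continuous fun z : ℂ => z ^ i)).continuousOn).frequently

lemma Fn_differentiableOn {a : ℕ → ℂ} (ha : Summable fun n => ‖a n‖) :
    DifferentiableOn ℂ (Fn a) (ball 0 1) := by
  refine Complex.differentiableOn_tsum_of_summable_norm ha
    (fun i => ((differentiable_const _).mul (differentiable_pow i)).differentiableOn)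
    isOpen_ball (fun i w hw => term_norm_le (le_of_lt (by simpa using mem_ball_zero_iff.mp hw)) i)

lemma Fn_mul {a b : ℕ → ℂ} (ha : Summable fun n => ‖a n‖) (hb : Summable fun n => ‖b n‖)
    {z : ℂ} (hz : ‖z‖ ≤ 1) :
    Fn a z * Fn b z = Fn (fun n => ∑ k ∈ Finset.range (n + 1), a k * b (n - k)) z := by
  rw [Fn, Fn, Fn,
    tsum_mul_tsum_eq_tsum_sum_range_of_summable_norm (summable_term ha hz) (summable_term hb hz)]
  congr 1
  funext n
  rw [Finset.sum_mul]
  refine Finset.sum_congr rfl fun k hk => ?_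
  have hkn : k ≤ n := Nat.lt_succ_iff.mp (Finset.mem_range.mp hk)
  rw [mul_mul_mul_comm, ← pow_add, Nat.add_sub_cancel' hkn]

lemma Fn_zero_eval (a : ℕ → ℂ) : Fn a 0 = a 0 := by
  rw [Fn, tsum_eq_single 0 (fun n hn => by simp [zero_pow hn])]
  simp

lemma Fn_sub {a b : ℕ → ℂ} (ha : Summable fun n => ‖a n‖) (hb : Summable fun n => ‖b n‖)
    {z : ℂ} (hz : ‖z‖ ≤ 1) :
    Fn (fun n => a n - b n) z = Fn a z - Fn b z := by
  rw [Fn, Fn, Fn]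
  simp_rw [sub_mul]
  exact Summable.tsum_sub (summable_term ha hz).of_norm (summable_term hb hz).of_norm

/-- The Cauchy product of two elements of `ℓ₁(ℕ₀)` is again in `ℓ₁(ℕ₀)`. -/
theorem cauchyProduct_memℓp {𝕜 : Type*} [RCLike 𝕜] (x y : lp (fun _ : ℕ => 𝕜) 1) :
    Memℓp (fun n : ℕ => ∑ k ∈ Finset.range (n + 1), x k * y (n - k)) 1 := by
  have hone : (0:ℝ) < (1 : ℝ≥0∞).toReal := by simp
  have hx : Summable fun r : ℕ => ‖x r‖ := by
    have := (memℓp_gen_iff hone).1 (lp.memℓp x); simpa using this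
  have hy : Summable fun s : ℕ => ‖y s‖ := by
    have := (memℓp_gen_iff hone).1 (lp.memℓp y); simpa using this
  apply memℓp_gen
  simp only [ENNReal.toReal_one, Real.rpow_one]
  exact summable_norm_sum_mul_range_of_summable_norm hx hy

/-- The Cauchy product (convolution) on `ℓ₁(ℕ₀)`:
`(x ∗ y)(n) = ∑_{k=0}^{n} x(k) y(n−k)`. -/
noncomputable def cauchyProduct {𝕜 : Type*} [RCLike 𝕜]
    (x y : lp (fun _ : ℕ => 𝕜) 1) : lp (fun _ : ℕ => 𝕜) 1 :=
  ⟨fun n => ∑ k ∈ Finset.range (n + 1), x k * y (n - k), cauchyProduct_memℓp x y⟩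

set_option maxHeartbeats 1000000

/-- The Cauchy product in `ℓ₁(ℕ₀)` (real or complex scalars) is not an open map:
there are `x, y ∈ ℓ₁(ℕ₀)` and `ε > 0` such that for no `δ > 0` is the ball
`B(x ∗ y, δ)` contained in `B(x, ε) ∗ B(y, ε)`. -/
theorem cauchyProduct_not_open {𝕜 : Type*} [RCLike 𝕜] :
    ∃ (x y : lp (fun _ : ℕ => 𝕜) 1), ∃ ε > 0, ∀ δ > 0,
      ¬ Metric.ball (cauchyProduct x y) δ ⊆
          Set.image2 cauchyProduct (Metric.ball x ε) (Metric.ball y ε) := by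
  classical
  have hone : (0:ℝ) < (1 : ℝ≥0∞).toReal := by simp
  have hsummable : ∀ w : lp (fun _ : ℕ => 𝕜) 1, Summable fun n => ‖w n‖ := by
    intro w
    have := (memℓp_gen_iff hone).1 (lp.memℓp w)
    simpa using this
  have htsum : ∀ w : lp (fun _ : ℕ => 𝕜) 1, ∑' n, ‖w n‖ = ‖w‖ := by
    intro w
    have := lp.norm_rpow_eq_tsum (p := 1) hone w
    simpa using this.symm
  set x : lp (fun _ : ℕ => 𝕜) 1 := lp.single 1 1 ((fun _ => (1:𝕜)) 1) with hxdef
  refine ⟨x, 0, 1/4, by norm_num, fun δ hδ hsub => ?_⟩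
  set e0 : lp (fun _ : ℕ => 𝕜) 1 := lp.single 1 0 ((fun _ => (1:𝕜)) 0) with he0
  set c : ℝ := δ/2 with hc
  have hcpos : 0 < c := by positivity
  set z : lp (fun _ : ℕ => 𝕜) 1 := ((c : 𝕜)) • e0 with hzdef
  have hprod0 : cauchyProduct x (0 : lp (fun _ : ℕ => 𝕜) 1) = 0 := by
    apply lp.ext
    funext n
    show ∑ k ∈ Finset.range (n+1), x k * (0 : lp (fun _ : ℕ => 𝕜) 1) (n - k) = _
    simp [lp.coeFn_zero]
  have hz : z ∈ Metric.ball (cauchyProduct x (0 : lp (fun _ : ℕ => 𝕜) 1)) δ := by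
    rw [Metric.mem_ball, hprod0, dist_zero_right, hzdef, norm_smul,
      lp.norm_single (E := fun _ : ℕ => 𝕜) (p := 1) (by norm_num) 0 ((fun _ => (1:𝕜)) 0)]
    rw [RCLike.norm_ofReal]
    simp only [norm_one, mul_one]
    rw [abs_of_pos hcpos]
    rw [hc]; linarith
  obtain ⟨u, hu, v, hv, huv⟩ := Set.mem_image2.mp (hsub hz)
  -- complex power series coefficients
  set au : ℕ → ℂ := fun n => toC (u n) with hau
  set av : ℕ → ℂ := fun n => toC (v n) with hav
  set ax : ℕ → ℂ := fun n => toC (x n) with hax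
  have hsau : Summable fun n => ‖au n‖ := by
    rw [hau]; simp only [norm_toC]; exact hsummable u
  have hsav : Summable fun n => ‖av n‖ := by
    rw [hav]; simp only [norm_toC]; exact hsummable v
  have hsax : Summable fun n => ‖ax n‖ := by
    rw [hax]; simp only [norm_toC]; exact hsummable x
  have hub : ‖u - x‖ < 1/4 := by
    rw [← dist_eq_norm]; exact Metric.mem_ball.mp hu
  -- x coefficients
  have hx1 : x 1 = 1 := lp.single_apply_self 1 1 _
  have hxn : ∀ n : ℕ, n ≠ 1 → x n = 0 := fun n hn => lp.single_apply_ne 1 1 _ hn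
  have hFnax : ∀ w : ℂ, Fn ax w = w := by
    intro w
    rw [Fn, tsum_eq_single 1 (fun n hn => by simp [hax, hxn n hn])]
    simp [hax, hx1]
  -- nonvanishing of Fn au on the closed disc
  have hcC : toC ((c : 𝕜)) ≠ 0 := by
    intro h
    have := norm_toC ((c : 𝕜) : 𝕜)
    rw [h, norm_zero, RCLike.norm_ofReal, abs_of_pos hcpos] at this
    exact absurd this.symm (ne_of_gt hcpos)
  have hz0 : z 0 = (c : 𝕜) := by
    rw [hzdef, lp.coeFn_smul, Pi.smul_apply, lp.single_apply_self 1 0, smul_eq_mul, mul_one]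
  have hzn : ∀ n : ℕ, n ≠ 0 → z n = 0 := by
    intro n hn
    rw [hzdef, lp.coeFn_smul, Pi.smul_apply, lp.single_apply_ne 1 0 _ hn, smul_zero]
  have hFu_ne : ∀ w ∈ Metric.closedBall (0:ℂ) 1, Fn au w ≠ 0 := by
    intro w hw
    have hw1 : ‖w‖ ≤ 1 := by simpa using Metric.mem_closedBall.mp hw
    have hmul := Fn_mul hsau hsav hw1
    have hcoef : (fun n => ∑ k ∈ Finset.range (n + 1), au k * av (n - k))
        = fun n => toC (z n) := by
      funext n
      have : (cauchyProduct u v) n = z n := by rw [huv]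
      rw [← this]
      show _ = toC (∑ k ∈ Finset.range (n + 1), u k * v (n - k))
      rw [map_sum]
      exact Finset.sum_congr rfl fun k _ => (map_mul toC _ _).symm
    have hFnz : Fn (fun n => toC (z n)) w = toC ((c : 𝕜)) := by
      rw [Fn, tsum_eq_single 0 (fun n hn => by simp [hzn n hn])]
      simp [hz0]
    intro h0
    rw [hcoef, hFnz] at hmul
    rw [h0, zero_mul] at hmul
    exact hcC hmul.symm
  set H : ℂ → ℂ := fun w => (Fn au w)⁻¹ with hH
  have hHdc : DiffContOnCl ℂ H (Metric.ball 0 1) := by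
    refine ⟨(Fn_differentiableOn hsau).inv
      (fun w hw => hFu_ne w (Metric.ball_subset_closedBall hw)), ?_⟩
    rw [closure_ball (0:ℂ) one_ne_zero]
    exact (Fn_continuousOn hsau).inv₀ fun w hw => hFu_ne w hw
  have hbdry : ∀ w ∈ frontier (Metric.ball (0:ℂ) 1), ‖H w‖ ≤ 2 := by
    intro w hw
    rw [frontier_ball (0:ℂ) one_ne_zero] at hw
    have hw1 : ‖w‖ = 1 := by simpa using mem_sphere_zero_iff_norm.mp hw
    have hsub1 : ‖Fn au w - w‖ < 1/4 := by
      have heq : Fn au w - w = Fn (fun n => au n - ax n) w := by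
        rw [Fn_sub hsau hsax (le_of_eq hw1), hFnax w]
      have hdn : (fun n => au n - ax n) = fun n => toC ((u - x) n) := by
        funext n
        rw [lp.coeFn_sub, Pi.sub_apply, map_sub]
      have hsd : Summable fun n => ‖toC ((u - x) n)‖ := by
        simp only [norm_toC]; exact hsummable (u - x)
      calc ‖Fn au w - w‖ = ‖Fn (fun n => toC ((u - x) n)) w‖ := by rw [heq, hdn]
      _ ≤ ∑' n, ‖toC ((u - x) n)‖ := norm_Fn_le hsd (le_of_eq hw1)
      _ = ‖u - x‖ := by simp only [norm_toC]; exact htsum (u - x)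
      _ < 1/4 := hub
    have hlow : (1:ℝ)/2 ≤ ‖Fn au w‖ := by
      have h := norm_sub_norm_le w (Fn au w)
      rw [norm_sub_rev w, hw1] at h
      linarith
    rw [hH]
    simp only [norm_inv]
    rw [inv_le_comm₀ (by positivity) (by norm_num)]
    linarith
  have h0mem : (0:ℂ) ∈ closure (Metric.ball (0:ℂ) 1) := by
    rw [closure_ball (0:ℂ) one_ne_zero]
    exact Metric.mem_closedBall_self (by norm_num)
  have hmax := Complex.norm_le_of_forall_mem_frontier_norm_le Metric.isBounded_ball
    hHdc hbdry h0mem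
  -- evaluate at 0
  have hF0 : Fn au 0 = toC (u 0) := Fn_zero_eval au
  have hu0pos : 0 < ‖u 0‖ := by
    have := hFu_ne 0 (Metric.mem_closedBall_self (by norm_num))
    rw [hF0] at this
    have : toC (u 0) ≠ 0 := this
    have hnz : u 0 ≠ 0 := fun h => this (by rw [h, map_zero])
    exact norm_pos_iff.mpr hnz
  have hu0small : ‖u 0‖ < 1/4 := by
    have hx0 : x 0 = 0 := hxn 0 (by norm_num)
    have : ‖(u - x) 0‖ ≤ ‖u - x‖ := lp.norm_apply_le_norm one_ne_zero (u - x) 0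
    rw [lp.coeFn_sub, Pi.sub_apply, hx0, sub_zero] at this
    linarith
  have hH0 : ‖H 0‖ = ‖u 0‖⁻¹ := by
    rw [hH]; simp only [norm_inv]; rw [hF0, norm_toC]
  rw [hH0] at hmax
  have hinv : ‖u 0‖ * ‖u 0‖⁻¹ = 1 := mul_inv_cancel₀ (ne_of_gt hu0pos)
  nlinarith
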